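/- Let P be a finite partially ordered set with n elements and let v ∈ P. For 0 ≤ k ≤ n−1, let h_k(P,v) denote the number of linear extensions of P in which exactly k elements of P precede v. Then the sequence (h_k(P,v))_{k=0}^{n−1} has no internal zeros: if 0 ≤ i < j < k ≤ n−1 and h_i(P,v) ≠ 0 and h_k(P,v) ≠ 0, then h_j(P,v) ≠ 0. -/

import Mathlib

/-- `h_k(P,v)`: the number of linear extensions of the finite poset `P` in which exactly
`k` elements precede `v`, i.e. bijections `φ : P ≃ Fin (#P)` with `x < y → φ x < φ y`
and `φ v = k` (0-based, so `k` elements come before `v`). -/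
noncomputable def heightSeq (P : Type*) [Fintype P] [PartialOrder P] (v : P) (k : ℕ) : ℕ :=
  Nat.card {φ : P ≃ Fin (Fintype.card P) //
    (∀ x y : P, x < y → φ x < φ y) ∧ (φ v : ℕ) = k}

section Aux

open Finset

variable {P : Type*} [Fintype P] [PartialOrder P] [DecidableEq P]

/-- A "good" set for `v`: a lower set not containing `v` but containing everything below `v`. -/
def IsGoodSet (v : P) (S : Finset P) : Prop :=
  (∀ x ∈ S, ∀ y : P, y ≤ x → y ∈ S) ∧ v ∉ S ∧ (∀ x : P, x < v → x ∈ S)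

omit [PartialOrder P] [DecidableEq P] in
/-- For any bijection to `Fin n`, the value at `v` counts the elements mapped below it. -/
lemma equiv_val_eq_card (φ : P ≃ Fin (Fintype.card P)) (v : P) :
    (φ v : ℕ) = (univ.filter fun x => φ x < φ v).card := by
  have h1 : (univ.filter fun x => φ x < φ v).card
      = (univ.filter fun b : Fin (Fintype.card P) => b < φ v).card := by
    apply Finset.card_bij (fun x _ => φ x)
    · intro a ha; simp only [mem_filter, mem_univ, true_and] at ha ⊢; exact ha
    · intro a _ b _ h; exact φ.injective h
    · intro b hb
      refine ⟨φ.symm b, ?_, by simp⟩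
      simp only [mem_filter, mem_univ, true_and, Equiv.apply_symm_apply] at hb ⊢
      exact hb
  rw [h1]
  have : (univ.filter fun b : Fin (Fintype.card P) => b < φ v) = Finset.Iio (φ v) := by
    ext b; simp
  rw [this, Fin.card_Iio]

/-- If `h_k ≠ 0`, there is a good set of size `k`. -/
lemma exists_goodSet_of_ne_zero {v : P} {k : ℕ} (h : heightSeq P v k ≠ 0) :
    ∃ S : Finset P, IsGoodSet v S ∧ S.card = k := by
  have hne : Nonempty {φ : P ≃ Fin (Fintype.card P) //
      (∀ x y : P, x < y → φ x < φ y) ∧ (φ v : ℕ) = k} := by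
    by_contra hc
    haveI := not_nonempty_iff.mp hc
    exact h (by simp [heightSeq])
  obtain ⟨φ, hmono, hval⟩ := hne.some
  refine ⟨univ.filter fun x => φ x < φ v, ⟨?_, ?_, ?_⟩, ?_⟩
  · intro x hx y hy
    simp only [mem_filter, mem_univ, true_and] at hx ⊢
    rcases eq_or_lt_of_le hy with rfl | hlt
    · exact hx
    · exact lt_trans (hmono _ _ hlt) hx
  · simp
  · intro x hx; simp only [mem_filter, mem_univ, true_and]; exact hmono _ _ hx
  · rw [← equiv_val_eq_card φ v, hval]

/-- From a good set of size `k`, build a linear extension with `φ v = k`, so `h_k ≠ 0`. -/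
lemma ne_zero_of_goodSet {v : P} {S : Finset P} (hS : IsGoodSet v S) :
    heightSeq P v S.card ≠ 0 := by
  classical
  obtain ⟨hlow, hvS, hbelow⟩ := hS
  -- the class function : 0 on S, 1 on v, 2 elsewhere
  set cls : P → ℕ := fun x => if x ∈ S then 0 else if x = v then 1 else 2 with hcls
  set key : P → ℕ ×ₗ LinearExtension P :=
    fun x => toLex (cls x, toLinearExtension x) with hkey
  have hinj : Function.Injective key := by
    intro a b hab
    have := congrArg (fun p => (ofLex p).2) hab
    exact this
  have hclsv : cls v = 1 := by simp [hcls, hvS]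
  have hclsS : ∀ x ∈ S, cls x = 0 := by intro x hx; simp [hcls, hx]
  have hLE : StrictMono (toLinearExtension (α := P)) := by
    intro a b hab
    exact lt_of_le_of_ne (toLinearExtension.monotone hab.le) (fun h => hab.ne (congrArg id h))
  have hkmono : ∀ x y : P, x < y → key x < key y := by
    intro x y hxy
    have hcle : cls x ≤ cls y := by
      by_cases hyS : y ∈ S
      · rw [hclsS x (hlow y hyS x hxy.le), hclsS y hyS]
      · by_cases hyv : y = v
        · subst hyv
          rw [hclsS x (hbelow x hxy), hclsv]; norm_num
        · have : cls y = 2 := by simp [hcls, hyS, hyv]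
          rw [this]
          simp only [hcls]
          split_ifs <;> norm_num
    rcases lt_or_eq_of_le hcle with h | h
    · exact Prod.Lex.left _ _ h
    · rw [hkey]
      dsimp only
      rw [h]
      exact Prod.Lex.right _ (hLE hxy)
  -- `key x < key v ↔ x ∈ S`
  have hkeyv : ∀ x : P, key x < key v ↔ x ∈ S := by
    intro x
    constructor
    · intro hx
      rcases (show cls x < cls v ∨ cls x = cls v ∧ toLinearExtension x < toLinearExtension v from Prod.Lex.lt_iff.mp hx) with h | ⟨h1, h2⟩
      · simp only [hclsv] at h
        by_contra hxS
        simp [hcls, hxS] at h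
        split_ifs at h <;> omega
      · -- cls x = cls v = 1 forces x ∉ S and x = v, contradiction with h2
        exfalso
        by_cases hxS : x ∈ S
        · rw [hclsS x hxS, hclsv] at h1; omega
        · by_cases hxv : x = v
          · subst hxv; exact lt_irrefl _ h2
          · have : cls x = 2 := by simp [hcls, hxS, hxv]
            rw [this, hclsv] at h1; omega
    · intro hx
      apply Prod.Lex.left
      rw [hclsS x hx, hclsv]; norm_num
  -- the image of `key`
  set T : Finset (ℕ ×ₗ LinearExtension P) := univ.image key with hT
  have hTcard : T.card = Fintype.card P := by
    rw [hT, Finset.card_image_of_injective _ hinj, Finset.card_univ]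
  have hmemT : ∀ x : P, key x ∈ T := fun x => Finset.mem_image_of_mem key (mem_univ x)
  set ψ : Fin (Fintype.card P) ≃o {a // a ∈ T} := T.orderIsoOfFin hTcard with hψ
  set f : P → Fin (Fintype.card P) := fun x => ψ.symm ⟨key x, hmemT x⟩ with hf
  have hfinj : Function.Injective f := by
    intro a b hab
    have := ψ.symm.injective hab
    exact hinj (congrArg Subtype.val this)
  have hfbij : Function.Bijective f :=
    (Fintype.bijective_iff_injective_and_card f).mpr ⟨hfinj, by simp⟩
  set φ : P ≃ Fin (Fintype.card P) := Equiv.ofBijective f hfbij with hφ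
  have hφlt : ∀ x y : P, φ x < φ y ↔ key x < key y := by
    intro x y
    show ψ.symm _ < ψ.symm _ ↔ _
    rw [ψ.symm.lt_iff_lt]
    exact Subtype.mk_lt_mk
  have hφmono : ∀ x y : P, x < y → φ x < φ y := by
    intro x y hxy; exact (hφlt x y).mpr (hkmono x y hxy)
  have hφv : (φ v : ℕ) = S.card := by
    rw [equiv_val_eq_card φ v]
    congr 1
    ext x
    simp only [mem_filter, mem_univ, true_and]
    rw [hφlt, hkeyv]
  apply Nat.card_ne_zero.mpr
  exact ⟨⟨⟨φ, hφmono, hφv⟩⟩, inferInstance⟩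

/-- Growth: a good set strictly smaller than another good set can be enlarged by one element. -/
lemma goodSet_grow {v : P} {S T : Finset P} (hS : IsGoodSet v S) (hT : IsGoodSet v T)
    (hlt : S.card < T.card) : ∃ S' : Finset P, IsGoodSet v S' ∧ S'.card = S.card + 1 := by
  classical
  obtain ⟨hSlow, hvS, hSbelow⟩ := hS
  obtain ⟨hTlow, hvT, hTbelow⟩ := hT
  set U : Finset P := univ.filter fun x => v < x with hU
  -- T, U, {v} are pairwise disjoint
  have hTU : Disjoint T U := by
    rw [Finset.disjoint_right]
    intro x hxU hxT
    simp only [hU, mem_filter, mem_univ, true_and] at hxU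
    exact hvT (hTlow x hxT v hxU.le)
  have hvTU : v ∉ T ∪ U := by
    simp only [mem_union, not_or]
    exact ⟨hvT, by simp [hU]⟩
  have hcard1 : T.card + U.card + 1 ≤ Fintype.card P := by
    have : (insert v (T ∪ U)).card ≤ Fintype.card P := Finset.card_le_univ _
    rwa [Finset.card_insert_of_notMem hvTU, Finset.card_union_of_disjoint hTU] at this
  have hvSU : v ∉ S ∪ U := by
    simp only [mem_union, not_or]
    exact ⟨hvS, by simp [hU]⟩
  have hcard2 : (insert v (S ∪ U)).card < Fintype.card P := by
    calc (insert v (S ∪ U)).card ≤ S.card + U.card + 1 := by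
          rw [Finset.card_insert_of_notMem hvSU]
          exact Nat.add_le_add_right (Finset.card_union_le S U) 1
      _ < T.card + U.card + 1 := by omega
      _ ≤ Fintype.card P := hcard1
  have hCne : (univ \ insert v (S ∪ U)).Nonempty := by
    rw [← Finset.card_pos, Finset.card_sdiff_of_subset (Finset.subset_univ _), Finset.card_univ]
    omega
  obtain ⟨m, hmm⟩ := Finset.exists_minimal hCne
  have hmC : m ∈ univ \ insert v (S ∪ U) := hmm.prop
  have hmmin : ∀ y ∈ univ \ insert v (S ∪ U), ¬ y < m := fun y hy => hmm.not_lt hy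
  have hmC' : m ∉ insert v (S ∪ U) := (Finset.mem_sdiff.mp hmC).2
  simp only [Finset.mem_insert, mem_union, not_or] at hmC'
  obtain ⟨hmv, hmS, hmU⟩ := hmC'
  have hvm : ¬ v < m := by simpa [hU] using hmU
  refine ⟨insert m S, ⟨?_, ?_, ?_⟩, ?_⟩
  · -- lower set
    intro x hx y hy
    rcases Finset.mem_insert.mp hx with rfl | hxS
    · rcases eq_or_lt_of_le hy with rfl | hlt'
      · exact Finset.mem_insert_self _ _
      · -- y < m : show y ∈ S
        apply Finset.mem_insert_of_mem
        by_contra hyS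
        have hyC : y ∈ univ \ insert v (S ∪ U) := by
          simp only [Finset.mem_sdiff, mem_univ, true_and, Finset.mem_insert, mem_union,
            not_or, hU, mem_filter, true_and]
          refine ⟨?_, hyS, ?_⟩
          · rintro rfl; exact hvm hlt'
          · intro hvy; exact hvm (hvy.trans hlt')
        exact hmmin y hyC hlt'
    · exact Finset.mem_insert_of_mem (hSlow x hxS y hy)
  · simp only [Finset.mem_insert, not_or]
    exact ⟨fun h => hmv h.symm, hvS⟩
  · intro x hx; exact Finset.mem_insert_of_mem (hSbelow x hx)
  · rw [Finset.card_insert_of_notMem hmS]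

end Aux

/-- The height sequence `(h_k(P,v))_{k=0}^{n−1}` has no internal zeros. -/
theorem stmt10 (P : Type*) [Fintype P] [PartialOrder P] (v : P)
    (i j k : ℕ) (hij : i < j) (hjk : j < k) (hk : k ≤ Fintype.card P - 1)
    (hi0 : heightSeq P v i ≠ 0) (hk0 : heightSeq P v k ≠ 0) :
    heightSeq P v j ≠ 0 := by
  classical
  obtain ⟨S, hSgood, hScard⟩ := exists_goodSet_of_ne_zero hi0
  obtain ⟨T, hTgood, hTcard⟩ := exists_goodSet_of_ne_zero hk0
  -- by induction, there is a good set of each size between i and k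
  have key : ∀ m : ℕ, i ≤ m → m ≤ k → ∃ S' : Finset P, IsGoodSet v S' ∧ S'.card = m := by
    intro m
    induction m with
    | zero => intro h1 _; exact ⟨S, hSgood, by omega⟩
    | succ m ih =>
      intro h1 h2
      rcases Nat.lt_or_ge i (m + 1) with hlt | hge
      · have hm : i ≤ m := by omega
        obtain ⟨S', hS'good, hS'card⟩ := ih hm (by omega)
        have : S'.card < T.card := by omega
        obtain ⟨S'', hS''good, hS''card⟩ := goodSet_grow hS'good hTgood this
        exact ⟨S'', hS''good, by omega⟩
      · exact ⟨S, hSgood, by omega⟩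
  obtain ⟨S', hS'good, hS'card⟩ := key j (le_of_lt hij) (le_of_lt hjk)
  have := ne_zero_of_goodSet hS'good
  rwa [hS'card] at this
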